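/- Let G(p) be a framework on n nodes in general position in ℝ^r admitting a stress matrix S of rank n−r−1. Then there exists a Gale matrix Ẑ of p such that Ẑ_{ij} = 0 for all j = 1,...,r̄ and all i ∈ N̄(j+r+1), where N̄(k) is the set of vertices non-adjacent to k. Concretely, Ẑ can be taken to consist of the last r̄ columns of S. -/

import Mathlib

open Matrix

/-- The (r+1)×n matrix whose j-th column is (p^j, 1). -/
def calA {n r : ℕ} (p : Fin n → Fin r → ℝ) : Matrix (Fin (r + 1)) (Fin n) ℝ :=
  fun i j => if h : (i : ℕ) < r then p j ⟨i, h⟩ else 1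

/-- `Z` is a Gale matrix of the configuration `p`. -/
def IsGaleMatrix {n r : ℕ} (p : Fin n → Fin r → ℝ)
    (Z : Matrix (Fin n) (Fin (n - r - 1)) ℝ) : Prop :=
  LinearIndependent ℝ (fun j : Fin (n - r - 1) => (fun i => Z i j)) ∧
  (∀ j : Fin (n - r - 1), calA p *ᵥ (fun i => Z i j) = 0) ∧
  (∀ x : Fin n → ℝ, calA p *ᵥ x = 0 →
    ∃ c : Fin (n - r - 1) → ℝ, x = ∑ j, c j • (fun i => Z i j))

/-- No subset of the points of cardinality r+1 is affinely dependent. -/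
def InGeneralPosition {n r : ℕ} (p : Fin n → Fin r → ℝ) : Prop :=
  ∀ s : Finset (Fin n), s.card = r + 1 →
    AffineIndependent ℝ (fun i : {x // x ∈ s} => p i)

/-- `S` is a stress matrix of the framework `G(p)`. -/
def IsStressMatrix {n r : ℕ} (G : SimpleGraph (Fin n)) (p : Fin n → Fin r → ℝ)
    (S : Matrix (Fin n) (Fin n) ℝ) : Prop :=
  S.IsSymm ∧ (∀ i j, i ≠ j → ¬ G.Adj i j → S i j = 0) ∧ calA p * S = 0

/-- The vertex indexed `j + r + 1` (1-based), i.e. one of the last `n - r - 1` vertices. -/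
def vertOf (n r : ℕ) (j : Fin (n - r - 1)) : Fin n :=
  ⟨r + 1 + j, by have := j.isLt; omega⟩

set_option maxHeartbeats 1000000 in
theorem exists_gale_with_zero_pattern {n r : ℕ} (hn : r + 2 ≤ n)
    (G : SimpleGraph (Fin n)) (p : Fin n → Fin r → ℝ) (hgen : InGeneralPosition p)
    (S : Matrix (Fin n) (Fin n) ℝ) (hS : IsStressMatrix G p S)
    (hrank : S.rank = n - r - 1) :
    ∃ Zh : Matrix (Fin n) (Fin (n - r - 1)) ℝ,
      IsGaleMatrix p Zh ∧
      (∀ (j : Fin (n - r - 1)) (i : Fin n),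
        i ≠ vertOf n r j → ¬ G.Adj i (vertOf n r j) → Zh i j = 0) ∧
      (∀ (i : Fin n) (j : Fin (n - r - 1)), Zh i j = S i (vertOf n r j)) := by
  obtain ⟨hsymm, hzero, hAS⟩ := hS
  have hr1n : r + 1 ≤ n := by omega
  -- the embedding of the first r+1 indices
  set emb : Fin (r + 1) → Fin n := fun i => ⟨i.val, by omega⟩ with hemb
  have embinj : Function.Injective emb := by
    intro a b h
    apply Fin.ext
    simpa [hemb] using congrArg Fin.val h
  -- splitting sums over `Fin n`
  have sum_split : ∀ f : Fin n → ℝ,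
      ∑ k, f k = (∑ i, f (emb i)) + ∑ j, f (vertOf n r j) := by
    intro f
    have hnn : (r + 1) + (n - r - 1) = n := by omega
    rw [← (finCongr hnn).sum_comp f, Fin.sum_univ_add]
    congr 1
  -- affine independence of the first r+1 points
  have haff : AffineIndependent ℝ (fun i : Fin (r + 1) => p (emb i)) := by
    have hcard : (Finset.univ.map ⟨emb, embinj⟩).card = r + 1 := by simp
    have h := hgen _ hcard
    have hmem : ∀ i : Fin (r + 1), emb i ∈ Finset.univ.map ⟨emb, embinj⟩ :=
      fun i => Finset.mem_map_of_mem _ (Finset.mem_univ i)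
    exact h.comp_embedding ⟨fun i => ⟨emb i, hmem i⟩, fun a b hab =>
      embinj (congrArg Subtype.val hab)⟩
  -- the leading (r+1)×(r+1) block of calA
  set B : Matrix (Fin (r + 1)) (Fin (r + 1)) ℝ :=
    Matrix.of fun i j => calA p i (emb j) with hB
  have hBinj : Function.Injective B.mulVec := by
    rw [Matrix.mulVec_injective_iff_isUnit, ← Matrix.linearIndependent_cols_iff_isUnit]
    rw [Fintype.linearIndependent_iff]
    intro x hx j
    have hx' : ∀ i : Fin (r + 1), ∑ k, x k * B i k = 0 := by
      intro i
      have := congrFun hx i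
      simpa [Finset.sum_apply, Matrix.transpose_apply] using this
    have hsum : ∑ k : Fin (r + 1), x k = 0 := by
      have := hx' ⟨r, by omega⟩
      simpa [hB, calA] using this
    have hcomb : ∑ k : Fin (r + 1), x k • p (emb k) = 0 := by
      ext t
      have := hx' ⟨t.val, by omega⟩
      simp only [hB, Matrix.of_apply, calA, t.isLt, dif_pos] at this
      simpa [Finset.sum_apply, Fin.eta] using this
    exact affineIndependent_iff.mp haff Finset.univ x (by simpa using hsum)
      (by simpa using hcomb) j (Finset.mem_univ j)
  have hBunit : IsUnit B := Matrix.mulVec_injective_iff_isUnit.mp hBinj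
  have hBTinj : Function.Injective Bᵀ.mulVec :=
    Matrix.mulVec_injective_iff_isUnit.mpr ((Matrix.isUnit_transpose B).mpr hBunit)
  -- calA has full row rank
  have hAsurj : Function.Surjective (calA p).mulVec := by
    intro b
    obtain ⟨y, hy⟩ := Matrix.mulVec_surjective_iff_isUnit.mpr hBunit b
    refine ⟨fun k => if h : k.val < r + 1 then y ⟨k.val, h⟩ else 0, ?_⟩
    ext i
    have h1 : (calA p *ᵥ fun k => if h : k.val < r + 1 then y ⟨k.val, h⟩ else 0) i
        = ∑ k, calA p i k * (if h : k.val < r + 1 then y ⟨k.val, h⟩ else 0) := rfl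
    rw [h1, sum_split]
    have h2 : ∀ j : Fin (n - r - 1),
        calA p i (vertOf n r j) *
          (if h : (vertOf n r j).val < r + 1 then y ⟨(vertOf n r j).val, h⟩ else 0) = 0 := by
      intro j
      rw [dif_neg (by simp [vertOf]; omega)]
      ring
    rw [Finset.sum_congr rfl (fun j _ => h2 j), Finset.sum_const, smul_zero, add_zero]
    have h3 : ∀ k : Fin (r + 1),
        calA p i (emb k) *
          (if h : (emb k).val < r + 1 then y ⟨(emb k).val, h⟩ else 0) = B i k * y k := by
      intro k
      rw [dif_pos (by simp [hemb]; omega)]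
      simp [hB, hemb]
    rw [Finset.sum_congr rfl (fun k _ => h3 k)]
    exact congrFun hy i
  -- kernel dimension of calA
  have hkerA : Module.finrank ℝ (LinearMap.ker (calA p).mulVecLin) = n - r - 1 := by
    have hrn := LinearMap.finrank_range_add_finrank_ker (calA p).mulVecLin
    have htop : LinearMap.range (calA p).mulVecLin = ⊤ :=
      LinearMap.range_eq_top.mpr hAsurj
    rw [htop] at hrn
    simp only [finrank_top, Module.finrank_pi, Fintype.card_fin] at hrn
    omega
  -- the candidate Gale matrix: last n-r-1 columns of S
  set v : Fin (n - r - 1) → (Fin n → ℝ) := fun j => fun i => S i (vertOf n r j) with hv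
  have hvker : ∀ j, calA p *ᵥ v j = 0 := by
    intro j
    ext a
    have : (calA p * S) a (vertOf n r j) = 0 := by rw [hAS]; rfl
    rw [Matrix.mul_apply] at this
    simpa [hv, Matrix.mulVec, dotProduct] using this
  -- S * calAᵀ = 0
  have hSAT : S * (calA p)ᵀ = 0 := by
    have := congrArg Matrix.transpose hAS
    rwa [Matrix.transpose_mul, hsymm.eq, Matrix.transpose_zero] at this
  -- ker S.mulVecLin equals range of (calA p)ᵀ.mulVecLin
  have hATinj : Function.Injective ((calA p)ᵀ).mulVecLin := by
    rw [← LinearMap.ker_eq_bot, LinearMap.ker_eq_bot']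
    intro y hy
    apply hBTinj
    rw [Matrix.mulVec_zero]
    ext i
    have := congrFun hy (emb i)
    simp only [Matrix.mulVecLin_apply] at this
    simpa [Matrix.mulVec, dotProduct, hB, Matrix.transpose_apply,
      mul_comm] using this
  have hkerS : LinearMap.ker S.mulVecLin = LinearMap.range ((calA p)ᵀ).mulVecLin := by
    have hle : LinearMap.range ((calA p)ᵀ).mulVecLin ≤ LinearMap.ker S.mulVecLin := by
      rintro _ ⟨y, rfl⟩
      rw [LinearMap.mem_ker]
      simp only [Matrix.mulVecLin_apply]
      rw [Matrix.mulVec_mulVec, hSAT, Matrix.zero_mulVec]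
    refine (Submodule.eq_of_le_of_finrank_le hle ?_).symm
    have h1 : Module.finrank ℝ (LinearMap.range ((calA p)ᵀ).mulVecLin) = r + 1 := by
      have := LinearMap.finrank_range_add_finrank_ker ((calA p)ᵀ).mulVecLin
      rw [LinearMap.ker_eq_bot.mpr hATinj] at this
      simp only [finrank_bot, add_zero, Module.finrank_pi, Fintype.card_fin] at this
      omega
    have h2 : Module.finrank ℝ (LinearMap.ker S.mulVecLin) = r + 1 := by
      have hrn := LinearMap.finrank_range_add_finrank_ker S.mulVecLin
      have hr' : Module.finrank ℝ (LinearMap.range S.mulVecLin) = n - r - 1 := hrank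
      rw [hr'] at hrn
      simp only [Module.finrank_pi, Fintype.card_fin] at hrn
      omega
    rw [h1, h2]
  -- linear independence of the last n-r-1 columns of S
  have hli : LinearIndependent ℝ v := by
    rw [Fintype.linearIndependent_iff]
    intro c hc j
    set x : Fin n → ℝ :=
      fun k => if h : r + 1 ≤ k.val then c ⟨k.val - (r + 1), by omega⟩ else 0 with hx
    have hxemb : ∀ i : Fin (r + 1), x (emb i) = 0 := by
      intro i
      simp only [hx]
      rw [dif_neg (by simp [hemb]; omega)]
    have hxvert : ∀ j' : Fin (n - r - 1), x (vertOf n r j') = c j' := by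
      intro j'
      simp only [hx]
      rw [dif_pos (by simp [vertOf])]
      congr 1
      apply Fin.ext
      simp [vertOf]
    have hSx : x ∈ LinearMap.ker S.mulVecLin := by
      rw [LinearMap.mem_ker]
      ext i
      have h1 : (S.mulVecLin x) i = ∑ k, S i k * x k := rfl
      rw [h1, sum_split]
      have h2 : ∑ i' : Fin (r + 1), S i (emb i') * x (emb i') = 0 := by
        apply Finset.sum_eq_zero
        intro i' _
        rw [hxemb i', mul_zero]
      have h3 : ∑ j' : Fin (n - r - 1), S i (vertOf n r j') * x (vertOf n r j')
          = ∑ j' : Fin (n - r - 1), c j' * v j' i := by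
        refine Finset.sum_congr rfl fun j' _ => ?_
        rw [hxvert j', hv, mul_comm]
      rw [h2, h3, zero_add]
      have := congrFun hc i
      simpa [Finset.sum_apply] using this
    rw [hkerS] at hSx
    obtain ⟨y, hy⟩ := hSx
    have hy0 : y = 0 := by
      apply hBTinj
      rw [Matrix.mulVec_zero]
      ext i
      have := congrFun (congrArg id hy) (emb i)
      simp only [Matrix.mulVecLin_apply, id] at this
      rw [hxemb i] at this
      simpa [Matrix.mulVec, dotProduct, hB, Matrix.transpose_apply,
        mul_comm] using this
    rw [hy0] at hy
    simp only [Matrix.mulVecLin_apply, Matrix.mulVec_zero] at hy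
    have := congrFun hy (vertOf n r j)
    rw [hxvert j] at this
    exact this.symm
  -- the columns span the kernel of calA
  have hspan : Submodule.span ℝ (Set.range v) = LinearMap.ker (calA p).mulVecLin := by
    have hle : Submodule.span ℝ (Set.range v) ≤ LinearMap.ker (calA p).mulVecLin := by
      rw [Submodule.span_le]
      rintro _ ⟨j, rfl⟩
      rw [SetLike.mem_coe, LinearMap.mem_ker]
      exact hvker j
    refine Submodule.eq_of_le_of_finrank_le hle ?_
    rw [hkerA, finrank_span_eq_card hli]
    simp
  refine ⟨fun i j => S i (vertOf n r j), ⟨hli, hvker, ?_⟩, ?_, fun i j => rfl⟩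
  · intro x hxk
    have hx : x ∈ Submodule.span ℝ (Set.range v) := by
      rw [hspan, LinearMap.mem_ker]
      exact hxk
    rw [Submodule.mem_span_range_iff_exists_fun ℝ] at hx
    obtain ⟨c, hc⟩ := hx
    exact ⟨c, hc.symm⟩
  · intro j i hne hadj
    exact hzero i (vertOf n r j) hne hadj
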